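/- Let k'/k be a finite purely inseparable field extension in characteristic p > 0, B = k' ⊗_k k', and let m be the kernel of the multiplication map B → k', b₁ ⊗ b₂ ↦ b₁b₂. Then m is a nilpotent ideal: there exists n with 1 ≤ n ≤ [k':k] such that m^n = 0. -/

import Mathlib

open TensorProduct

/-- For a finite purely inseparable extension `k'/k` in characteristic `p`, the kernel `m`
of the multiplication map `k' ⊗[k] k' → k'` is nilpotent, with `m ^ n = 0` for some
`1 ≤ n ≤ [k':k]`. -/
theorem stmt2 (k k' : Type*) [Field k] [Field k'] [Algebra k k'] (p : ℕ) [Fact p.Prime]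
    [CharP k p] [FiniteDimensional k k']
    (hinsep : ∀ x : k', ∃ e : ℕ, x ^ p ^ e ∈ (algebraMap k k').range)
    (m : Ideal (k' ⊗[k] k'))
    (hm : m = RingHom.ker (Algebra.TensorProduct.lmul' k (S := k')).toRingHom) :
    ∃ n : ℕ, 1 ≤ n ∧ n ≤ Module.finrank k k' ∧ m ^ n = ⊥ := by
  classical
  set d := Module.finrank k k' with hd'
  have hd : 0 < d := Module.finrank_pos
  have hfr : Module.finrank k' (k' ⊗[k] k') = d := Module.finrank_baseChange
  haveI : Nontrivial (k' ⊗[k] k') := by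
    have h0 : 0 < Module.finrank k' (k' ⊗[k] k') := hfr ▸ hd
    exact Module.nontrivial_of_finrank_pos h0
  haveI : CharP (k' ⊗[k] k') p :=
    charP_of_injective_algebraMap (algebraMap k (k' ⊗[k] k')).injective p
  -- `m` consists of nilpotent elements
  have hnil : m ≤ nilradical (k' ⊗[k] k') := by
    rw [hm]
    have hker : RingHom.ker (Algebra.TensorProduct.lmul' k (S := k')).toRingHom
        = KaehlerDifferential.ideal k k' := rfl
    rw [hker, ← KaehlerDifferential.span_range_eq_ideal, Ideal.span_le]
    rintro _ ⟨s, rfl⟩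
    obtain ⟨e, c, hc⟩ := hinsep s
    refine mem_nilradical.mpr ⟨p ^ e, ?_⟩
    rw [sub_pow_char_pow, Algebra.TensorProduct.tmul_pow, Algebra.TensorProduct.tmul_pow,
      one_pow, ← hc, sub_eq_zero]
    rw [Algebra.algebraMap_eq_smul_one (A := k') c]
    exact (TensorProduct.smul_tmul c (1 : k') (1 : k')).symm
  have hJ : m ≤ Ideal.jacobson ⊥ := le_trans hnil (Ideal.radical_le_jacobson (I := ⊥))
  haveI : IsNoetherianRing (k' ⊗[k] k') :=
    isNoetherian_of_tower k' (inferInstance : IsNoetherian k' (k' ⊗[k] k'))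
  have hmt : m ≠ ⊤ := by
    rw [hm]
    exact RingHom.ker_ne_top _
  -- descending chain argument
  have key : ∀ i : ℕ, m ^ (i + 1) = ⊥ ∨
      Module.finrank k' ((m ^ (i + 1)).restrictScalars k') + (i + 1) ≤ d := by
    intro i
    induction i with
    | zero =>
      right
      rw [pow_one]
      have hlt : (m.restrictScalars k') < ⊤ := by
        refine lt_top_iff_ne_top.mpr fun h => hmt ?_
        apply Submodule.restrictScalars_injective k'
        rw [Submodule.restrictScalars_top]
        exact h
      have := Submodule.finrank_lt (K := k') (V := k' ⊗[k] k') hlt.ne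
      omega
    | succ j ih =>
      rcases ih with h | h
      · left
        rw [pow_succ, h]
        simp
      · by_cases hb : m ^ (j + 1 + 1) = ⊥
        · left; exact hb
        right
        have hle : m ^ (j + 1 + 1) ≤ m ^ (j + 1) := Ideal.pow_le_pow_right (by omega)
        have hne : m ^ (j + 1 + 1) ≠ m ^ (j + 1) := by
          intro he
          apply hb
          have hfg : (m ^ (j + 1)).FG := IsNoetherian.noetherian _
          have hsm : m ^ (j + 1) ≤ m • (m ^ (j + 1)) := by
            rw [Ideal.smul_eq_mul, ← pow_succ']
            exact le_of_eq he.symm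
          have := Submodule.eq_bot_of_le_smul_of_le_jacobson_bot m _ hfg hsm hJ
          rw [he, this]
        have hlt' : ((m ^ (j + 1 + 1)).restrictScalars k') < ((m ^ (j + 1)).restrictScalars k') :=
          lt_of_le_of_ne (fun x hx => hle hx)
            (fun he => hne (Submodule.restrictScalars_injective k' _ _ he))
        have := Submodule.finrank_lt_finrank_of_lt hlt'
        omega
  refine ⟨d, hd, le_refl _, ?_⟩
  obtain ⟨i, hi⟩ : ∃ i, d = i + 1 := ⟨d - 1, by omega⟩
  rw [hi]
  rcases key i with h | h
  · exact h
  · have h0 : Module.finrank k' ((m ^ (i + 1)).restrictScalars k') = 0 := by omega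
    have hbot := Submodule.finrank_eq_zero.mp h0
    exact Submodule.restrictScalars_injective k' _ _ (by rw [hbot]; rfl)
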